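/- arXiv:2405.02848 — 2 statements merged into one kernel-verified Lean document; each statement's English description precedes it below -/
import Mathlib

section
/- Let H be a complex Hilbert space, let η be a bounded positive invertible operator on H, and let A be a bounded operator on H which is η-quasi-Hermitian, i.e. A† = η A η⁻¹. Then the spectrum of A is real: every λ in the spectrum of A (as an element of the Banach algebra of bounded operators on H over ℂ) satisfies λ ∈ ℝ. -/
set_option synthInstance.maxHeartbeats 1000000
set_option maxHeartbeats 1000000


open scoped InnerProductSpace ComplexOrder

/-- **A quasi-Hermitian operator has real spectrum.**
If `η` is a bounded positive invertible operator on a complex Hilbert space `H`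
and `A` is a bounded operator with `A† = η A η⁻¹`, then every `λ` in the
spectrum of `A` is real. -/
theorem quasiHermitian_spectrum_real
    {H : Type*} [NormedAddCommGroup H] [InnerProductSpace ℂ H] [CompleteSpace H]
    (η : H →L[ℂ] H) (hsa : IsSelfAdjoint η)
    (hpos : ∀ x : H, 0 ≤ ⟪x, η x⟫_ℂ)
    (ηinv : H →L[ℂ] H) (hinv₁ : ηinv ∘L η = 1) (hinv₂ : η ∘L ηinv = 1)
    (A : H →L[ℂ] H)
    (hqH : ContinuousLinearMap.adjoint A = η ∘L A ∘L ηinv) :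
    ∀ lam ∈ spectrum ℂ A, ∃ r : ℝ, lam = (r : ℂ) := by
  -- ηinv ∘L η = η ∘L ηinv as multiplication
  have hinv₁' : ηinv * η = 1 := hinv₁
  have hinv₂' : η * ηinv = 1 := hinv₂
  -- η is nonnegative in the Loewner order
  have hη_nonneg : (0 : H →L[ℂ] H) ≤ η := by
    rw [ContinuousLinearMap.nonneg_iff_isPositive]
    refine ContinuousLinearMap.isPositive_def'.mpr ⟨hsa, fun x => ?_⟩
    have hx := hpos x
    rw [ContinuousLinearMap.reApplyInnerSelf, ← inner_re_symm]
    rw [Complex.nonneg_iff] at hx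
    exact hx.1
  -- take the square root B of η
  set B := CFC.sqrt η with hB
  have hB2 : B * B = η := CFC.sqrt_mul_sqrt_self η hη_nonneg
  have hBnn : (0 : H →L[ℂ] H) ≤ B := CFC.sqrt_nonneg (a := η)
  have hBsa : IsSelfAdjoint B := IsSelfAdjoint.of_nonneg hBnn
  -- ηinv * B and B * ηinv are both two-sided inverses of B
  have h₁ : (ηinv * B) * B = 1 := by rw [mul_assoc, hB2]; exact hinv₁'
  have h₂ : B * (B * ηinv) = 1 := by rw [← mul_assoc, hB2]; exact hinv₂'
  have hcomm : ηinv * B = B * ηinv := left_inv_eq_right_inv h₁ h₂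
  -- assemble B into a unit
  set u : (H →L[ℂ] H)ˣ := ⟨B, B * ηinv, h₂, by rw [← hcomm]; exact h₁⟩ with hu
  have hucoe : (u : H →L[ℂ] H) = B := rfl
  have huinv : ((u⁻¹ : (H →L[ℂ] H)ˣ) : H →L[ℂ] H) = B * ηinv := rfl
  -- star of A
  have hstarA : star A = η * A * ηinv := by
    rw [ContinuousLinearMap.star_eq_adjoint, hqH]; rfl
  -- ηinv is self-adjoint
  have hηinv_sa : star ηinv = ηinv := by
    have h3 : star ηinv * η = 1 := by
      have := congrArg star hinv₂'
      rwa [star_mul, hsa.star_eq, star_one] at this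
    calc star ηinv = star ηinv * (η * ηinv) := by rw [hinv₂', mul_one]
      _ = (star ηinv * η) * ηinv := by rw [mul_assoc]
      _ = ηinv := by rw [h3, one_mul]
  -- the conjugated operator T is self-adjoint
  set T : H →L[ℂ] H := u * A * ↑u⁻¹ with hT
  have hTsa : IsSelfAdjoint T := by
    show star T = T
    rw [hT, hucoe, huinv]
    simp only [star_mul, hBsa.star_eq, hηinv_sa, hstarA]
    simp only [← mul_assoc]
    rw [mul_assoc ηinv B η]
    rw [show B * η = η * B from by rw [← hB2, mul_assoc, ← mul_assoc]]
    rw [← mul_assoc, hinv₁', one_mul]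
    rw [mul_assoc (B*A) ηinv B, hcomm, ← mul_assoc]
  -- the spectra agree
  intro lam hlam
  have hspec : lam ∈ spectrum ℂ T := by
    rw [hT, spectrum.units_conjugate]; exact hlam
  exact ⟨lam.re, hTsa.mem_spectrum_eq_re hspec⟩
end

section
/- For all natural numbers l and m, the probabilists' Hermite polynomials are orthogonal with respect to the Gaussian weight: ∫_{−∞}^{∞} He_l(t) · He_m(t) · exp(−t²/2) dt = √(2π) · l! · δ_{lm}, where δ_{lm} = 1 if l = m and 0 otherwise. In particular, the harmonic-oscillator eigenfunctions φ_l(x) = (2^{−l}/(l! L √π))^{1/2} e^{−x²/(2L²)} H_l(x/L), with H_l the physicists' Hermite polynomial and L > 0, satisfy ∫_{−∞}^{∞} φ_l(x) φ_m(x) dx = δ_{lm}. -/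
open Real MeasureTheory

/-- The normalized `l`-th harmonic-oscillator eigenfunction with length scale `L`:
`φ_l(x) = (2^{−l}/(l! L √π))^{1/2} e^{−x²/(2L²)} H_l(x/L)`, where
`H_l(y) = 2^{l/2} He_l(√2 y)` is the `l`-th physicists' Hermite polynomial. -/
noncomputable def hoEigenfun (L : ℝ) (l : ℕ) (x : ℝ) : ℝ :=
  Real.sqrt ((1 / 2) ^ l / (l.factorial * L * Real.sqrt π)) *
    Real.exp (-(x ^ 2) / (2 * L ^ 2)) *
    (Real.sqrt 2 ^ l * Polynomial.aeval (Real.sqrt 2 * (x / L)) (Polynomial.hermite l))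

open Polynomial Filter

noncomputable def Gpg (p : Polynomial ℤ) (t : ℝ) : ℝ :=
  Polynomial.aeval t p * Real.exp (-(t ^ 2) / 2)

lemma Gpg_hasDerivAt (p : Polynomial ℤ) (t : ℝ) :
    HasDerivAt (Gpg p) (Gpg (derivative p - X * p) t) t := by
  have h1 : HasDerivAt (fun x : ℝ => aeval x p) (aeval t (derivative p)) t :=
    p.hasDerivAt_aeval t
  have h2 : HasDerivAt (fun x : ℝ => Real.exp (-(x ^ 2) / 2))
      (-t * Real.exp (-(t ^ 2) / 2)) t := by
    have : HasDerivAt (fun x : ℝ => -(x ^ 2) / 2) (-t) t := by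
      have := (hasDerivAt_pow 2 t).neg.div_const 2
      refine this.congr_deriv ?_
      push_cast; ring
    simpa [mul_comm] using this.exp
  have := h1.mul h2
  refine this.congr_deriv ?_
  simp [Gpg, mul_comm, mul_assoc, mul_left_comm]
  ring

lemma Gpg_integrable (p : Polynomial ℤ) : Integrable (Gpg p) := by
  have base : ∀ n : ℕ, Integrable (fun t : ℝ => t ^ n * Real.exp (-(t ^ 2) / 2)) := by
    intro n
    have h := (integrable_rpow_mul_exp_neg_mul_sq (b := (1:ℝ)/2) (by norm_num)
      (s := (n : ℝ)) (by exact lt_of_lt_of_le (by norm_num) (Nat.cast_nonneg n))).abs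
    refine h.mono' ?_ ?_
    · exact ((continuous_pow n).mul (by continuity)).aestronglyMeasurable
    · filter_upwards with t
      rw [Real.norm_eq_abs]
      apply le_of_eq
      congr 1
      rw [Real.rpow_natCast]
      congr 2
      ring
  induction p using Polynomial.induction_on' with
  | add p q hp hq => exact (hp.add hq).congr (by filter_upwards with t; simp [Gpg]; ring)
  | monomial n a =>
      refine ((base n).const_mul (a : ℝ)).congr ?_
      filter_upwards with t
      simp [Gpg, mul_assoc]

lemma Gpg_tendsto_atTop (p : Polynomial ℤ) : Tendsto (Gpg p) atTop (nhds 0) := by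
  have hg : Tendsto (fun t : ℝ => |(p.map (Int.castRingHom ℝ)).eval t| * Real.exp (-t)) atTop (nhds 0) := by
    have h := (p.map (Int.castRingHom ℝ)).tendsto_div_exp_atTop
    have h2 := h.abs
    simp only [abs_zero] at h2
    refine h2.congr' ?_
    filter_upwards with t
    rw [abs_div, Real.abs_exp, Real.exp_neg, div_eq_mul_inv]
  refine squeeze_zero_norm' ?_ hg
  · filter_upwards [Filter.eventually_ge_atTop (2:ℝ)] with t ht
    have h1 : Gpg p t = (p.map (Int.castRingHom ℝ)).eval t * Real.exp (-(t^2)/2) := by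
      simp [Gpg, aeval_def, eval₂_eq_eval_map]
    rw [h1, norm_mul, Real.norm_eq_abs, Real.norm_eq_abs, Real.abs_exp]
    exact mul_le_mul_of_nonneg_left (Real.exp_le_exp.2 (by nlinarith)) (abs_nonneg _)

lemma Gpg_tendsto_atBot (p : Polynomial ℤ) : Tendsto (Gpg p) atBot (nhds 0) := by
  have h := Gpg_tendsto_atTop (p.comp (-X))
  have h2 : Tendsto (fun t : ℝ => Gpg (p.comp (-X)) (-t)) atBot (nhds 0) :=
    h.comp tendsto_neg_atBot_atTop
  refine h2.congr ?_
  intro t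
  simp [Gpg, aeval_comp]

lemma Gpg_integral_deriv (p : Polynomial ℤ) :
    ∫ t : ℝ, Gpg (derivative p - X * p) t = 0 := by
  have hint := (Gpg_integrable (derivative p - X * p))
  rw [← setIntegral_univ, ← Set.Iic_union_Ioi (a := (0:ℝ)),
    integral_union_ae (Set.Iic_disjoint_Ioi le_rfl).aedisjoint measurableSet_Ioi.nullMeasurableSet
      hint.integrableOn hint.integrableOn]
  have h1 : ∫ t in Set.Iic (0:ℝ), Gpg (derivative p - X * p) t = Gpg p 0 - 0 :=
    integral_Iic_of_hasDerivAt_of_tendsto' (fun x _ => Gpg_hasDerivAt p x)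
      hint.integrableOn (Gpg_tendsto_atBot p)
  have h2 : ∫ t in Set.Ioi (0:ℝ), Gpg (derivative p - X * p) t = 0 - Gpg p 0 :=
    integral_Ioi_of_hasDerivAt_of_tendsto' (fun x _ => Gpg_hasDerivAt p x)
      hint.integrableOn (Gpg_tendsto_atTop p)
  rw [h1, h2]; ring

lemma derivative_hermite (n : ℕ) :
    derivative (hermite (n+1)) = ((n : Polynomial ℤ) + 1) * hermite n := by
  induction n with
  | zero => simp [hermite_one, hermite_zero]
  | succ k ih =>
    rw [hermite_succ (k+1), derivative_sub, derivative_mul, derivative_X, one_mul, ih,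
      derivative_mul, hermite_succ k]
    simp only [derivative_add, derivative_natCast, derivative_one, add_zero, zero_mul, zero_add]
    push_cast
    ring

lemma hermite_rec (l m : ℕ) :
    ∫ t : ℝ, Gpg (hermite (l+1) * hermite m) t
      = ∫ t : ℝ, Gpg (hermite l * derivative (hermite m)) t := by
  have h := Gpg_integral_deriv (hermite l * hermite m)
  have hp : derivative (hermite l * hermite m) - X * (hermite l * hermite m)
      = hermite l * derivative (hermite m) - hermite (l+1) * hermite m := by
    rw [derivative_mul, hermite_succ l]; ring
  rw [hp] at h
  have h2 : (∫ t : ℝ, Gpg (hermite l * derivative (hermite m)) t)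
      - ∫ t : ℝ, Gpg (hermite (l+1) * hermite m) t = 0 := by
    rw [← integral_sub (Gpg_integrable _) (Gpg_integrable _), ← h]
    congr 1
    funext t
    simp [Gpg]
    ring
  linarith [h2]

lemma hermite_int (l m : ℕ) :
    ∫ t : ℝ, Gpg (hermite l * hermite m) t
      = Real.sqrt (2 * π) * l.factorial * (if l = m then 1 else 0) := by
  induction l generalizing m with
  | zero =>
    match m with
    | 0 =>
      have : ∀ t : ℝ, Gpg (hermite 0 * hermite 0) t = Real.exp (-(1/2 : ℝ) * t ^ 2) := by
        intro t
        simp [Gpg, hermite_zero]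
        congr 1
        ring
      simp_rw [this]
      rw [integral_gaussian]
      rw [show π / (1/2 : ℝ) = 2 * π by ring]
      simp
    | (k+1) =>
      rw [mul_comm, hermite_rec k 0]
      simp [hermite_zero, Gpg]
  | succ l ih =>
    match m with
    | 0 =>
      rw [hermite_rec l 0]
      simp [hermite_zero, Gpg]
    | (k+1) =>
      rw [hermite_rec l (k+1), derivative_hermite k]
      have hpt : ∀ t : ℝ, Gpg (hermite l * (((k : Polynomial ℤ) + 1) * hermite k)) t
          = ((k:ℝ)+1) * Gpg (hermite l * hermite k) t := by
        intro t
        simp [Gpg]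
        ring
      simp_rw [hpt]
      rw [MeasureTheory.integral_const_mul, ih k]
      rcases eq_or_ne l k with rfl | hlk
      · simp [Nat.factorial_succ]
        push_cast
        ring
      · simp [hlk, fun h => hlk (Nat.succ_injective h)]

/-- **Orthogonality of Hermite polynomials and harmonic-oscillator eigenfunctions.**
For all `l, m`: `∫ He_l(t) He_m(t) e^{−t²/2} dt = √(2π)·l!·δ_{lm}`, and for `L > 0`
the normalized eigenfunctions satisfy `∫ φ_l(x) φ_m(x) dx = δ_{lm}`. -/
theorem hermite_orthogonality (L : ℝ) (hL : 0 < L) (l m : ℕ) :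
    (∫ t : ℝ, (Polynomial.aeval t (Polynomial.hermite l) : ℝ) *
        Polynomial.aeval t (Polynomial.hermite m) * Real.exp (-(t ^ 2) / 2)
      = Real.sqrt (2 * π) * l.factorial * (if l = m then 1 else 0)) ∧
    (∫ x : ℝ, hoEigenfun L l x * hoEigenfun L m x = (if l = m then 1 else 0)) := by
  have hpart1 : ∫ t : ℝ, (Polynomial.aeval t (Polynomial.hermite l) : ℝ) *
        Polynomial.aeval t (Polynomial.hermite m) * Real.exp (-(t ^ 2) / 2)
      = Real.sqrt (2 * π) * l.factorial * (if l = m then 1 else 0) := by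
    rw [← hermite_int l m]
    congr 1
    funext t
    simp [Gpg]
  refine ⟨hpart1, ?_⟩
  have hL' : L ≠ 0 := ne_of_gt hL
  have h2 : Real.sqrt 2 ^ 2 = 2 := Real.sq_sqrt (by norm_num)
  have key : ∀ x : ℝ, hoEigenfun L l x * hoEigenfun L m x
      = (Real.sqrt ((1/2)^l / (l.factorial * L * Real.sqrt π)) *
         Real.sqrt ((1/2)^m / (m.factorial * L * Real.sqrt π)) *
         (Real.sqrt 2 ^ l * Real.sqrt 2 ^ m)) *
        Gpg (hermite l * hermite m) (Real.sqrt 2 / L * x) := by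
    intro x
    have harg : Real.sqrt 2 * (x / L) = Real.sqrt 2 / L * x := by ring
    have hexp : Real.exp (-(x ^ 2) / (2 * L ^ 2)) * Real.exp (-(x ^ 2) / (2 * L ^ 2))
        = Real.exp (-((Real.sqrt 2 / L * x) ^ 2) / 2) := by
      rw [← Real.exp_add]
      congr 1
      rw [mul_pow, div_pow, h2]
      field_simp
      ring
    simp only [hoEigenfun, Gpg, map_mul, harg]
    rw [← hexp]
    ring
  simp_rw [key]
  rw [MeasureTheory.integral_const_mul, MeasureTheory.Measure.integral_comp_mul_left
      (Gpg (hermite l * hermite m)) (Real.sqrt 2 / L), hermite_int l m]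
  rcases eq_or_ne l m with rfl | hlm
  · simp only [if_pos rfl, mul_one, smul_eq_mul]
    have hsqrt2 : (0:ℝ) < Real.sqrt 2 := Real.sqrt_pos.2 (by norm_num)
    have hsqpi : (0:ℝ) < Real.sqrt π := Real.sqrt_pos.2 pi_pos
    have hfac : (0:ℝ) < l.factorial := by exact_mod_cast l.factorial_pos
    have hsq : Real.sqrt ((1/2)^l / (l.factorial * L * Real.sqrt π)) *
        Real.sqrt ((1/2)^l / (l.factorial * L * Real.sqrt π))
        = (1/2)^l / (l.factorial * L * Real.sqrt π) :=
      Real.mul_self_sqrt (by positivity)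
    have h2l : Real.sqrt 2 ^ l * Real.sqrt 2 ^ l = 2 ^ l := by
      rw [← mul_pow, Real.mul_self_sqrt (by norm_num)]
    have habs : |(Real.sqrt 2 / L)⁻¹| = L / Real.sqrt 2 := by
      rw [abs_of_pos (by positivity), inv_div]
    have h2pi : Real.sqrt (2 * π) = Real.sqrt 2 * Real.sqrt π :=
      Real.sqrt_mul (by norm_num) π
    rw [hsq, h2l, habs, h2pi]
    field_simp
    rw [← mul_pow]; norm_num
  · simp [hlm]
end
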